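/- Let G' be the 3-subdivision of a graph G = (V,E). For every vertex cover W' of G', there exists a vertex cover W'' of G' with |W''| ≤ |W'| such that for every edge (u,v) of G, exactly one of the two subdivision vertices u', v' on the corresponding path u - u' - v' - v belongs to W''. -/

import Mathlib

/-- `W` is a vertex cover of the simple graph `G`. -/
def IsVertexCover {V : Type*} (G : SimpleGraph V) (W : Finset V) : Prop :=
  ∀ x y, G.Adj x y → x ∈ W ∨ y ∈ W

/-- `W` is a vertex cover of the 3-subdivision `G'` of `G`.  The 3-subdivision replaces
each edge `{u,v}` of `G` by the path `u - u' - v' - v`; we encode the subdivision vertex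
`u'` adjacent to `u` on edge `{u,v}` as `Sum.inr (u, v)`, and the original vertices as
`Sum.inl`.  A vertex cover consists of genuine vertices of `G'` and touches each of the
three edges `(u,u')`, `(u',v')`, `(v',v)` of every subdivided edge. -/
def IsSubdivVertexCover {V : Type*} (G : SimpleGraph V) (W : Finset (V ⊕ V × V)) : Prop :=
  (∀ p : V × V, Sum.inr p ∈ W → G.Adj p.1 p.2) ∧
  ∀ u v, G.Adj u v →
    (Sum.inl u ∈ W ∨ Sum.inr (u, v) ∈ W) ∧
    (Sum.inr (u, v) ∈ W ∨ Sum.inr (v, u) ∈ W) ∧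
    (Sum.inr (v, u) ∈ W ∨ Sum.inl v ∈ W)

/-- Every vertex cover `W'` of the 3-subdivision of `G` can be improved to a vertex
cover `W''` of no larger size such that, for each edge `{u,v}` of `G`, exactly one of
the two subdivision vertices `u' = Sum.inr (u,v)` and `v' = Sum.inr (v,u)` is in `W''`. -/
theorem subdiv_cover_exactly_one {V : Type*} (G : SimpleGraph V)
    (W' : Finset (V ⊕ V × V)) (hW' : IsSubdivVertexCover G W') :
    ∃ W'' : Finset (V ⊕ V × V), IsSubdivVertexCover G W'' ∧ W''.card ≤ W'.card ∧
      ∀ u v, G.Adj u v → (Sum.inr (u, v) ∈ W'' ↔ Sum.inr (v, u) ∉ W'') := by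
  classical
  set r : V → V → Prop := WellOrderingRel with hr
  have hasymm : ∀ a b, r a b → ¬ r b a := fun a b h h' =>
    (Std.Asymm.asymm (r := WellOrderingRel) a b h) h'
  have htri : ∀ a b : V, a ≠ b → r a b ∨ r b a := by
    intro a b hab
    rcases trichotomous_of WellOrderingRel a b with h | h | h
    · exact Or.inl h
    · exact absurd h hab
    · exact Or.inr h
  set f : (V ⊕ V × V) → (V ⊕ V × V) := fun x =>
    match x with
    | Sum.inl u => Sum.inl u
    | Sum.inr (u, v) => if Sum.inr (v, u) ∈ W' ∧ r v u then Sum.inl u else Sum.inr (u, v)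
    with hf
  refine ⟨W'.image f, ?_, Finset.card_image_le, ?_⟩
  · obtain ⟨h1, h2⟩ := hW'
    -- membership characterization for inr
    have hmem : ∀ p : V × V, Sum.inr p ∈ W'.image f ↔
        (Sum.inr p ∈ W' ∧ ¬ (Sum.inr (p.2, p.1) ∈ W' ∧ r p.2 p.1)) := by
      rintro ⟨u, v⟩
      simp only [Finset.mem_image]
      constructor
      · rintro ⟨x, hx, hfx⟩
        match x with
        | Sum.inl a => simp [hf] at hfx
        | Sum.inr (a, b) =>
          simp only [hf] at hfx
          split at hfx
          · exact absurd hfx (by simp)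
          · rename_i hcond
            obtain ⟨ha, hb⟩ : a = u ∧ b = v := by
              simpa using hfx
            subst ha; subst hb
            exact ⟨hx, hcond⟩
      · rintro ⟨hx, hcond⟩
        exact ⟨Sum.inr (u, v), hx, by simp [hf, hcond]⟩
    have hinl : ∀ u : V, Sum.inl u ∈ W' → Sum.inl u ∈ W'.image f :=
      fun u hu => Finset.mem_image.2 ⟨Sum.inl u, hu, rfl⟩
    constructor
    · rintro ⟨u, v⟩ hp
      exact h1 (u, v) ((hmem (u, v)).1 hp).1
    · intro u v huv
      obtain ⟨c1, c2, c3⟩ := h2 u v huv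
      have hne : u ≠ v := huv.ne
      refine ⟨?_, ?_, ?_⟩
      · rcases c1 with h | h
        · exact Or.inl (hinl u h)
        · by_cases hc : Sum.inr (v, u) ∈ W' ∧ r v u
          · refine Or.inl (Finset.mem_image.2 ⟨Sum.inr (u, v), h, by simp [hf, hc]⟩)
          · exact Or.inr ((hmem (u, v)).2 ⟨h, hc⟩)
      · by_cases ha : Sum.inr (u, v) ∈ W' <;> by_cases hb : Sum.inr (v, u) ∈ W'
        · rcases htri u v hne with hl | hl
          · exact Or.inl ((hmem (u, v)).2 ⟨ha, fun hc => hasymm u v hl hc.2⟩)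
          · exact Or.inr ((hmem (v, u)).2 ⟨hb, fun hc => hasymm v u hl hc.2⟩)
        · exact Or.inl ((hmem (u, v)).2 ⟨ha, fun hc => hb hc.1⟩)
        · exact Or.inr ((hmem (v, u)).2 ⟨hb, fun hc => ha hc.1⟩)
        · rcases c2 with h | h
          · exact absurd h ha
          · exact absurd h hb
      · rcases c3 with h | h
        · by_cases hc : Sum.inr (u, v) ∈ W' ∧ r u v
          · refine Or.inr (Finset.mem_image.2 ⟨Sum.inr (v, u), h, by simp [hf, hc]⟩)
          · exact Or.inl ((hmem (v, u)).2 ⟨h, hc⟩)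
        · exact Or.inr (hinl v h)
  · obtain ⟨h1, h2⟩ := hW'
    have hmem : ∀ p : V × V, Sum.inr p ∈ W'.image f ↔
        (Sum.inr p ∈ W' ∧ ¬ (Sum.inr (p.2, p.1) ∈ W' ∧ r p.2 p.1)) := by
      rintro ⟨u, v⟩
      simp only [Finset.mem_image]
      constructor
      · rintro ⟨x, hx, hfx⟩
        match x with
        | Sum.inl a => simp [hf] at hfx
        | Sum.inr (a, b) =>
          simp only [hf] at hfx
          split at hfx
          · exact absurd hfx (by simp)
          · rename_i hcond
            obtain ⟨ha, hb⟩ : a = u ∧ b = v := by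
              simpa using hfx
            subst ha; subst hb
            exact ⟨hx, hcond⟩
      · rintro ⟨hx, hcond⟩
        exact ⟨Sum.inr (u, v), hx, by simp [hf, hcond]⟩
    intro u v huv
    obtain ⟨_, c2, _⟩ := h2 u v huv
    have hne : u ≠ v := huv.ne
    rw [hmem (u, v), hmem (v, u)]
    by_cases ha : Sum.inr (u, v) ∈ W' <;> by_cases hb : Sum.inr (v, u) ∈ W'
    · rcases htri u v hne with hl | hl
      · constructor
        · rintro ⟨-, -⟩ ⟨-, hc⟩
          exact hc ⟨ha, hl⟩
        · intro h
          refine ⟨ha, fun hc => hasymm u v hl hc.2⟩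
      · constructor
        · rintro ⟨-, hc⟩
          exact absurd ⟨hb, hl⟩ hc
        · intro h
          exact absurd ⟨hb, fun hc => hasymm v u hl hc.2⟩ h
    · simp [ha, hb]
    · simp [ha, hb]
    · rcases c2 with h | h
      · exact absurd h ha
      · exact absurd h hb
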